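/- Partial trace does not increase the max-relative entropy: for bipartite density matrices ρ_{AB}, σ_{AB} with supp(ρ_{AB}) ⊆ supp(σ_{AB}), D_max(ρ_A‖σ_A) ≤ D_max(ρ_{AB}‖σ_{AB}). -/

import Mathlib

open Matrix BigOperators Classical ComplexOrder

noncomputable section

variable {n : Type*} [Fintype n] [DecidableEq n]

/-- positive-semidefinite square root, extended by 0. -/
noncomputable def msqrt (A : Matrix n n ℂ) : Matrix n n ℂ :=
  if h : A.PosSemidef then
    (h.1.eigenvectorUnitary : Matrix n n ℂ) *
      diagonal ((↑) ∘ (fun x : ℝ => Real.sqrt x) ∘ h.1.eigenvalues) *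
      (star (h.1.eigenvectorUnitary : Matrix n n ℂ))
  else 0

/-- trace norm ‖X‖₁ = Tr √(XᴴX). -/
noncomputable def traceNorm (X : Matrix n n ℂ) : ℝ :=
  (msqrt (Xᴴ * X)).trace.re

/-- fidelity F(ρ,σ) = ‖√ρ√σ‖₁. -/
noncomputable def fidelity (ρ σ : Matrix n n ℂ) : ℝ :=
  traceNorm (msqrt ρ * msqrt σ)

/-- purified distance. -/
noncomputable def purifiedDist (ρ σ : Matrix n n ℂ) : ℝ :=
  Real.sqrt (1 - (fidelity ρ σ)^2)

def IsDensityMatrix (ρ : Matrix n n ℂ) : Prop := ρ.PosSemidef ∧ ρ.trace = 1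

/-- max-relative entropy. -/
noncomputable def Dmax (ρ σ : Matrix n n ℂ) : ℝ :=
  sInf {l : ℝ | ((((2:ℝ)^l : ℝ) : ℂ) • σ - ρ).PosSemidef}

/-- smooth hypothesis testing divergence. -/
noncomputable def DH (ε : ℝ) (ρ τ : Matrix n n ℂ) : ℝ :=
  sSup {r : ℝ | ∃ P : Matrix n n ℂ, P.PosSemidef ∧ ((1 : Matrix n n ℂ) - P).PosSemidef ∧
    1 - ε ≤ ((P * ρ).trace).re ∧ r = - Real.logb 2 ((P * τ).trace).re}

/-- functional calculus for hermitian matrices (0 otherwise). -/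
noncomputable def hermCFC (f : ℝ → ℝ) (A : Matrix n n ℂ) : Matrix n n ℂ :=
  if h : A.IsHermitian then
    (Matrix.IsHermitian.eigenvectorUnitary h : Matrix n n ℂ) *
      Matrix.diagonal (fun i => (f (h.eigenvalues i) : ℂ)) *
      (star (Matrix.IsHermitian.eigenvectorUnitary h : Matrix n n ℂ))
  else 0

/-- von Neumann entropy (base 2). -/
noncomputable def vnEntropy (ρ : Matrix n n ℂ) : ℝ :=
  if h : ρ.IsHermitian then -∑ i, (h.eigenvalues i) * Real.logb 2 (h.eigenvalues i) else 0

end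


section DmaxAux

set_option linter.unusedSectionVars false

variable {n : Type*} [Fintype n] [DecidableEq n]

lemma quad_eq {M : Matrix n n ℂ} (h : M.IsHermitian) (v : n → ℂ) :
    star v ⬝ᵥ (M *ᵥ v) =
      ((∑ i, h.eigenvalues i * Complex.normSq
        ((star (h.eigenvectorUnitary : Matrix n n ℂ) *ᵥ v) i) : ℝ) : ℂ) := by
  set U : Matrix n n ℂ := (h.eigenvectorUnitary : Matrix n n ℂ) with hU
  set w : n → ℂ := star U *ᵥ v with hw
  have hs : M = U * diagonal (Complex.ofReal ∘ h.eigenvalues) * star U := h.spectral_theorem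
  have h1 : M *ᵥ v = U *ᵥ (diagonal (Complex.ofReal ∘ h.eigenvalues) *ᵥ w) := by
    conv_lhs => rw [hs]
    simp [hw, ← Matrix.mulVec_mulVec, Matrix.mul_assoc]
  have hsw : star v ᵥ* U = star w := by
    rw [hw, Matrix.star_mulVec, Matrix.star_eq_conjTranspose, Matrix.conjTranspose_conjTranspose]
  rw [h1, Matrix.dotProduct_mulVec, hsw]
  rw [dotProduct, Complex.ofReal_sum]
  refine Finset.sum_congr rfl fun i _ => ?_
  rw [Matrix.mulVec_diagonal]
  push_cast
  rw [Complex.normSq_eq_conj_mul_self]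
  simp [Pi.star_apply, Complex.star_def]
  ring

lemma trace_eq_sum_eigen {M : Matrix n n ℂ} (h : M.IsHermitian) :
    M.trace = ((∑ i, h.eigenvalues i : ℝ) : ℂ) := by
  have hs : M = (h.eigenvectorUnitary : Matrix n n ℂ) * diagonal (Complex.ofReal ∘ h.eigenvalues)
      * star (h.eigenvectorUnitary : Matrix n n ℂ) := h.spectral_theorem
  have hUU : star (h.eigenvectorUnitary : Matrix n n ℂ) * (h.eigenvectorUnitary : Matrix n n ℂ) = 1 :=
    (Matrix.mem_unitaryGroup_iff').mp h.eigenvectorUnitary.2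
  calc M.trace = ((h.eigenvectorUnitary : Matrix n n ℂ) * diagonal (Complex.ofReal ∘ h.eigenvalues)
      * star (h.eigenvectorUnitary : Matrix n n ℂ)).trace := by rw [← hs]
    _ = (star (h.eigenvectorUnitary : Matrix n n ℂ) * (h.eigenvectorUnitary : Matrix n n ℂ)
        * diagonal (Complex.ofReal ∘ h.eigenvalues)).trace := by
        rw [Matrix.trace_mul_cycle, Matrix.mul_assoc]
    _ = _ := by rw [hUU, one_mul, Matrix.trace_diagonal]; push_cast; rfl

lemma ptr_posSemidef {A B : Type*} [Fintype A] [DecidableEq A] [Fintype B] [DecidableEq B]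
    {M : Matrix (A × B) (A × B) ℂ} (hM : M.PosSemidef) :
    (Matrix.of fun i j => ∑ k : B, M (i, k) (j, k)).PosSemidef := by
  rw [Matrix.posSemidef_iff_dotProduct_mulVec]
  constructor
  · show _ = _
    ext i j
    simp only [Matrix.conjTranspose_apply, Matrix.of_apply, star_sum]
    refine Finset.sum_congr rfl fun k _ => ?_
    simpa using congrFun (congrFun hM.1 (i,k)) (j,k)
  · intro x
    have key : star x ⬝ᵥ ((Matrix.of fun i j => ∑ k : B, M (i, k) (j, k)) *ᵥ x)
        = ∑ k : B, star (fun p : A × B => if p.2 = k then x p.1 else 0) ⬝ᵥ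
            (M *ᵥ (fun p : A × B => if p.2 = k then x p.1 else 0)) := by
      simp only [dotProduct, Matrix.mulVec, dotProduct, Matrix.of_apply,
        Pi.star_apply, Fintype.sum_prod_type, apply_ite (star : ℂ → ℂ), star_zero, ite_mul,
        zero_mul, mul_ite, mul_zero]
      simp only [Finset.sum_ite_eq', Finset.mem_univ, if_true, Finset.mul_sum, Finset.sum_mul]
      rw [Finset.sum_comm]
      refine (Finset.sum_congr rfl fun x1 _ => Finset.sum_comm).trans ?_
      rw [Finset.sum_comm]
      exact Finset.sum_congr rfl fun k _ => Finset.sum_comm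
    rw [key]
    exact Finset.sum_nonneg fun k _ => hM.dotProduct_mulVec_nonneg _

lemma dot_star_self (u : n → ℂ) :
    star u ⬝ᵥ u = ((∑ i, Complex.normSq (u i) : ℝ) : ℂ) := by
  rw [dotProduct, Complex.ofReal_sum]
  refine Finset.sum_congr rfl fun i _ => ?_
  simp [Pi.star_apply, Complex.star_def, Complex.normSq_eq_conj_mul_self]

lemma norm_mulVec_isometry {W : Matrix n n ℂ} (hW : Wᴴ * W = 1) (z : n → ℂ) :
    ∑ i, Complex.normSq ((W *ᵥ z) i) = ∑ i, Complex.normSq (z i) := by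
  have h : star (W *ᵥ z) ⬝ᵥ (W *ᵥ z) = star z ⬝ᵥ z := by
    rw [Matrix.star_mulVec, Matrix.dotProduct_mulVec, Matrix.vecMul_vecMul]
    rw [show star z ᵥ* (Wᴴ * W) = star z ᵥ* (1 : Matrix n n ℂ) by rw [hW]]
    rw [Matrix.vecMul_one]
  rw [dot_star_self, dot_star_self] at h
  exact_mod_cast h

lemma exists_smul_sub_posSemidef {ρ σ : Matrix n n ℂ} (hρ : ρ.PosSemidef) (hρt : ρ.trace = 1)
    (hσ : σ.PosSemidef) (hsupp : ∀ v : n → ℂ, σ *ᵥ v = 0 → ρ *ᵥ v = 0) :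
    ∃ l : ℝ, ((((2:ℝ)^l : ℝ) : ℂ) • σ - ρ).PosSemidef := by
  classical
  have hS := hσ.1
  set d : n → ℝ := hS.eigenvalues with hd
  set U : Matrix n n ℂ := (hS.eigenvectorUnitary : Matrix n n ℂ) with hU
  have hUU : U * star U = 1 := (Matrix.mem_unitaryGroup_iff).mp hS.eigenvectorUnitary.2
  have hU'U : star U * U = 1 := (Matrix.mem_unitaryGroup_iff').mp hS.eigenvectorUnitary.2
  set t : ℝ := max 1 (∑ i, if d i = 0 then 0 else 1 / d i) with htdef
  have hd0 : ∀ i, 0 ≤ d i := hσ.eigenvalues_nonneg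
  have ht1 : (1:ℝ) ≤ t := le_max_left _ _
  have ht0 : (0:ℝ) < t := lt_of_lt_of_le one_pos ht1
  have htd : ∀ i, d i ≠ 0 → 1 ≤ t * d i := by
    intro i hi
    have hdi : 0 < d i := (hd0 i).lt_of_ne (Ne.symm hi)
    have h1 : (if d i = 0 then 0 else 1 / d i) ≤ ∑ j, if d j = 0 then 0 else 1 / d j :=
      Finset.single_le_sum (f := fun j => if d j = 0 then (0:ℝ) else 1 / d j)
        (fun j _ => by split; exacts [le_rfl, div_nonneg zero_le_one (hd0 j)]) (Finset.mem_univ i)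
    rw [if_neg hi] at h1
    have h2 : 1 / d i ≤ t := h1.trans (le_max_right _ _)
    calc (1:ℝ) = (1 / d i) * d i := by field_simp
      _ ≤ t * d i := by apply mul_le_mul_of_nonneg_right h2 (hd0 i)
  -- eigenvalues of ρ are ≤ 1
  have hμsum : ∑ j, hρ.1.eigenvalues j = 1 := by
    have := trace_eq_sum_eigen hρ.1
    rw [hρt] at this
    exact_mod_cast this.symm
  have hμ0 : ∀ j, 0 ≤ hρ.1.eigenvalues j := hρ.eigenvalues_nonneg
  have hμ1 : ∀ j, hρ.1.eigenvalues j ≤ 1 := by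
    intro j
    rw [← hμsum]
    exact Finset.single_le_sum (fun k _ => hμ0 k) (Finset.mem_univ j)
  refine ⟨Real.logb 2 t, ?_⟩
  rw [Real.rpow_logb two_pos (by norm_num) ht0]
  rw [Matrix.posSemidef_iff_dotProduct_mulVec]
  constructor
  · show _ = _
    rw [Matrix.conjTranspose_sub, Matrix.conjTranspose_smul, hρ.1, hσ.1]
    norm_num [Complex.star_def, Complex.conj_ofReal]
  · intro v
    set w : n → ℂ := star U *ᵥ v with hw
    set w1 : n → ℂ := fun i => if d i = 0 then 0 else w i with hw1
    set w0 : n → ℂ := fun i => if d i = 0 then w i else 0 with hw0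
    set v1 : n → ℂ := U *ᵥ w1 with hv1
    set v0 : n → ℂ := U *ᵥ w0 with hv0
    have hvsum : v = v0 + v1 := by
      have h01 : w0 + w1 = w := by
        funext i; by_cases h : d i = 0 <;> simp [hw0, hw1, h]
      calc v = (U * star U) *ᵥ v := by rw [hUU, Matrix.one_mulVec]
        _ = U *ᵥ w := by rw [← Matrix.mulVec_mulVec, hw]
        _ = v0 + v1 := by rw [← h01, Matrix.mulVec_add, hv0, hv1]
    have hσv0 : σ *ᵥ v0 = 0 := by
      have hs : σ = U * diagonal (Complex.ofReal ∘ d) * star U := hS.spectral_theorem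
      calc σ *ᵥ v0 = (U * diagonal (Complex.ofReal ∘ d) * star U * U) *ᵥ w0 := by
            conv_lhs => rw [hs]
            rw [hv0, Matrix.mulVec_mulVec]
        _ = (U * diagonal (Complex.ofReal ∘ d)) *ᵥ w0 := by
            rw [Matrix.mul_assoc (U * diagonal (Complex.ofReal ∘ d)), hU'U, Matrix.mul_one]
        _ = U *ᵥ (diagonal (Complex.ofReal ∘ d) *ᵥ w0) := by rw [Matrix.mulVec_mulVec]
        _ = 0 := by
            have : diagonal (Complex.ofReal ∘ d) *ᵥ w0 = 0 := by
              funext i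
              by_cases h : d i = 0 <;>
                simp [Matrix.mulVec_diagonal, hw0, h, Function.comp]
            rw [this, Matrix.mulVec_zero]
    have hρv0 : ρ *ᵥ v0 = 0 := hsupp _ hσv0
    have hQρ : star v ⬝ᵥ (ρ *ᵥ v) = star v1 ⬝ᵥ (ρ *ᵥ v1) := by
      rw [hvsum, Matrix.mulVec_add, hρv0, zero_add, star_add, add_dotProduct]
      have h2 : star v0 ⬝ᵥ (ρ *ᵥ v1) = 0 := by
        rw [Matrix.dotProduct_mulVec]
        have : star v0 ᵥ* ρ = 0 := by
          have := Matrix.star_mulVec (ρᴴ) v0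
          rw [Matrix.conjTranspose_conjTranspose, hρ.1, hρv0, star_zero] at this
          exact this.symm
        rw [this, zero_dotProduct]
      rw [h2, zero_add]
    -- express quadratic forms as real sums
    have hQσ := quad_eq hS v
    have hQρ1 := quad_eq hρ.1 v1
    set μ : n → ℝ := hρ.1.eigenvalues
    set y : n → ℂ := star (hρ.1.eigenvectorUnitary : Matrix n n ℂ) *ᵥ v1 with hy
    -- the norm chain
    have hyv1 : ∑ j, Complex.normSq (y j) = ∑ j, Complex.normSq (v1 j) := by
      apply norm_mulVec_isometry
      rw [Matrix.star_eq_conjTranspose, Matrix.conjTranspose_conjTranspose]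
      exact (Matrix.mem_unitaryGroup_iff).mp hρ.1.eigenvectorUnitary.2
    have hv1w1 : ∑ j, Complex.normSq (v1 j) = ∑ j, Complex.normSq (w1 j) := by
      apply norm_mulVec_isometry
      exact hU'U
    have key : (t * ∑ i, d i * Complex.normSq (w i))
        - (∑ j, μ j * Complex.normSq (y j)) ≥ 0 := by
      have h1 : (∑ j, μ j * Complex.normSq (y j)) ≤ ∑ j, Complex.normSq (y j) := by
        refine Finset.sum_le_sum fun j _ => ?_
        calc μ j * Complex.normSq (y j) ≤ 1 * Complex.normSq (y j) :=
              mul_le_mul_of_nonneg_right (hμ1 j) (Complex.normSq_nonneg _)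
          _ = _ := one_mul _
      have h2 : (∑ j, Complex.normSq (y j)) ≤ t * ∑ i, d i * Complex.normSq (w i) := by
        rw [hyv1, hv1w1, Finset.mul_sum]
        refine Finset.sum_le_sum fun i _ => ?_
        by_cases h : d i = 0
        · simp [hw1, h]
        · rw [hw1]; simp only [if_neg h]
          calc Complex.normSq (w i) = 1 * Complex.normSq (w i) := (one_mul _).symm
            _ ≤ (t * d i) * Complex.normSq (w i) :=
                mul_le_mul_of_nonneg_right (htd i h) (Complex.normSq_nonneg _)
            _ = t * (d i * Complex.normSq (w i)) := by ring
      linarith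
    -- conclude
    have hexpand : star v ⬝ᵥ (((t:ℂ) • σ - ρ) *ᵥ v)
        = (((t * ∑ i, d i * Complex.normSq (w i))
            - (∑ j, μ j * Complex.normSq (y j)) : ℝ) : ℂ) := by
      rw [Matrix.sub_mulVec, dotProduct_sub, Matrix.smul_mulVec,
        dotProduct_smul, hQρ, hQρ1, hQσ]
      push_cast
      rw [smul_eq_mul]
    rw [hexpand]
    rw [show ((0:ℂ) = ((0:ℝ):ℂ)) by norm_num]
    rw [Complex.real_le_real]
    linarith

lemma psd_diag_nonneg {M : Matrix n n ℂ} (h : M.PosSemidef) (i : n) : 0 ≤ M i i := by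
  have := h.dotProduct_mulVec_nonneg (Pi.single i 1)
  simpa [Matrix.mulVec_single, dotProduct, Pi.single_apply] using this

open Matrix ComplexOrder in
theorem dmax_partialTrace' {A B : Type*} [Fintype A] [DecidableEq A] [Fintype B] [DecidableEq B]
    (ρ σ : Matrix (A × B) (A × B) ℂ) (hρ : ρ.PosSemidef ∧ ρ.trace = 1)
    (hσ : σ.PosSemidef ∧ σ.trace = 1)
    (hsupp : ∀ v : A × B → ℂ, σ *ᵥ v = 0 → ρ *ᵥ v = 0) :
    sInf {l : ℝ | ((((2:ℝ)^l : ℝ) : ℂ) • (Matrix.of fun i j => ∑ k : B, σ (i, k) (j, k))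
        - (Matrix.of fun i j => ∑ k : B, ρ (i, k) (j, k))).PosSemidef}
      ≤ sInf {l : ℝ | ((((2:ℝ)^l : ℝ) : ℂ) • σ - ρ).PosSemidef} := by
  have htrρ : (Matrix.of fun i j => ∑ k : B, ρ (i, k) (j, k)).trace = 1 := by
    rw [← hρ.2]
    rw [Matrix.trace, Matrix.trace, Fintype.sum_prod_type]
    rfl
  have htrσ : (Matrix.of fun i j => ∑ k : B, σ (i, k) (j, k)).trace = 1 := by
    rw [← hσ.2]
    rw [Matrix.trace, Matrix.trace, Fintype.sum_prod_type]
    rfl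
  apply csInf_le_csInf
  · -- bounded below by 0
    refine ⟨0, fun l hl => ?_⟩
    by_contra hneg
    push_neg at hneg
    have hc : ((2:ℝ)^l : ℝ) < 1 := Real.rpow_lt_one_of_one_lt_of_neg one_lt_two hneg
    set M := ((((2:ℝ)^l : ℝ) : ℂ) • (Matrix.of fun i j => ∑ k : B, σ (i, k) (j, k))
        - (Matrix.of fun i j => ∑ k : B, ρ (i, k) (j, k))) with hM
    have htr : M.trace = ((((2:ℝ)^l - 1 : ℝ)) : ℂ) := by
      rw [hM, Matrix.trace_sub, Matrix.trace_smul, htrρ, htrσ]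
      push_cast
      rw [smul_eq_mul]
      ring
    have h0 : (0:ℂ) ≤ M.trace := by
      rw [Matrix.trace]
      exact Finset.sum_nonneg fun i _ => psd_diag_nonneg hl i
    rw [htr] at h0
    have : (0:ℝ) ≤ (2:ℝ)^l - 1 := by exact_mod_cast h0
    linarith
  · obtain ⟨l, hl⟩ := exists_smul_sub_posSemidef hρ.1 hρ.2 hσ.1 hsupp
    exact ⟨l, hl⟩
  · intro l hl
    have := ptr_posSemidef (A := A) (B := B) hl
    have heq : (Matrix.of fun i j => ∑ k : B,
          ((((2:ℝ)^l : ℝ) : ℂ) • σ - ρ) (i, k) (j, k))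
        = ((((2:ℝ)^l : ℝ) : ℂ) • (Matrix.of fun i j => ∑ k : B, σ (i, k) (j, k))
            - (Matrix.of fun i j => ∑ k : B, ρ (i, k) (j, k))) := by
      ext i j
      simp [Matrix.sub_apply, Matrix.smul_apply, Finset.sum_sub_distrib, Finset.mul_sum]
    rw [heq] at this
    exact this

end DmaxAux

open Matrix ComplexOrder in
/-- Partial trace does not increase the max-relative entropy:
`D_max(ρ_A‖σ_A) ≤ D_max(ρ_{AB}‖σ_{AB})` when `supp(ρ_{AB}) ⊆ supp(σ_{AB})`. -/
theorem dmax_partialTrace {A B : Type*} [Fintype A] [DecidableEq A] [Fintype B] [DecidableEq B]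
    (ρ σ : Matrix (A × B) (A × B) ℂ) (hρ : IsDensityMatrix ρ) (hσ : IsDensityMatrix σ)
    (hsupp : ∀ v : A × B → ℂ, σ *ᵥ v = 0 → ρ *ᵥ v = 0) :
    Dmax (Matrix.of fun i j => ∑ k : B, ρ (i, k) (j, k))
        (Matrix.of fun i j => ∑ k : B, σ (i, k) (j, k)) ≤ Dmax ρ σ := by
  exact dmax_partialTrace' ρ σ hρ hσ hsupp
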